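/- For all integers a, b, c, d such that b and d are coprime, there exists an integer x such that a + b·x and c + d·x are coprime. -/
import Mathlib

theorem exists_coprime_shift (a b c d : ℤ) (h : IsCoprime b d) :
    ∃ x : ℤ, IsCoprime (a + b * x) (c + d * x) := by
  obtain ⟨u, v, huv⟩ := h
  refine ⟨b * c - a * d + 1 - (a * u + c * v), ⟨u + d, v - b, ?_⟩⟩
  linear_combination (b * c - a * d + 1 - (a * u + c * v)) * huv
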